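/- Let n₀, n₁, n₂ ∈ ℝ³ with ‖n_i‖ ≤ 1 for each i, and suppose the three vectors lie in a common plane through the origin (i.e., there exists a nonzero w ∈ ℝ³ with ⟨w, n_i⟩ = 0 for all i). Then there exist a permutation (i,j,k) of (0,1,2) and q ∈ [0,1] such that ‖n_i + q n_j + (1−q) n_k‖ + ‖n_i − q n_j − (1−q) n_k‖ ≤ 2. -/

import Mathlib

open scoped RealInnerProductSpace

noncomputable section

/-- If `b` is a scalar multiple of `a` and both have norm at most 1, the Busch sum is ≤ 2. -/
lemma busch_par_case (E : Type*) [NormedAddCommGroup E] [NormedSpace ℝ E]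
    (a b : E) (ha : ‖a‖ ≤ 1) (hb : ‖b‖ ≤ 1) (t : ℝ) (hbt : b = t • a) :
    ‖a + b‖ + ‖a - b‖ ≤ 2 := by
  subst hbt
  have h1 : a + t • a = (1 + t) • a := by module
  have h2 : a - t • a = (1 - t) • a := by module
  rw [h1, h2]
  simp only [norm_smul, Real.norm_eq_abs] at hb ⊢
  rcases abs_cases t with ⟨h, _⟩ | ⟨h, _⟩ <;>
    rcases abs_cases (1 + t) with ⟨h3, _⟩ | ⟨h3, _⟩ <;>
    rcases abs_cases (1 - t) with ⟨h4, _⟩ | ⟨h4, _⟩ <;>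
    nlinarith [norm_nonneg a]

/-- the triple determinant of three vectors in `ℝ³` -/
def D3 (w u v : EuclideanSpace ℝ (Fin 3)) : ℝ := (Matrix.of ![(w : Fin 3 → ℝ), u, v]).det

lemma D3_formula (w u v : EuclideanSpace ℝ (Fin 3)) : D3 w u v =
    w 0 * u 1 * v 2 - w 0 * u 2 * v 1 - w 1 * u 0 * v 2 + w 1 * u 2 * v 0
      + w 2 * u 0 * v 1 - w 2 * u 1 * v 0 := by
  simp [D3, Matrix.det_fin_three, Matrix.of_apply]

lemma dep_of_D3_zero (w u v : EuclideanSpace ℝ (Fin 3)) (hw : w ≠ 0)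
    (hu : ⟪w, u⟫ = 0) (hv : ⟪w, v⟫ = 0) (hune : u ≠ 0) (hD : D3 w u v = 0) :
    ∃ t : ℝ, v = t • u := by
  obtain ⟨c, hc, hcM⟩ := Matrix.exists_vecMul_eq_zero_iff.mpr hD
  have heq : ∀ j : Fin 3, c 0 * w j + c 1 * u j + c 2 * v j = 0 := by
    intro j
    have := congrFun hcM j
    simpa [Matrix.vecMul, dotProduct, Fin.sum_univ_three] using this
  have hiu : ∑ j : Fin 3, w j * u j = 0 := by
    simpa [PiLp.inner_apply, RCLike.inner_apply, conj_trivial, mul_comm] using hu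
  have hiv : ∑ j : Fin 3, w j * v j = 0 := by
    simpa [PiLp.inner_apply, RCLike.inner_apply, conj_trivial, mul_comm] using hv
  have hww : (0:ℝ) < ∑ j : Fin 3, w j * w j := by
    have : ∃ j, w j ≠ 0 := by
      by_contra h
      push_neg at h
      exact hw (by ext i; simpa using h i)
    obtain ⟨j, hj⟩ := this
    have h1 : (0:ℝ) < w j * w j := mul_self_pos.mpr hj
    have h2 : ∀ i ∈ Finset.univ, (0:ℝ) ≤ w i * w i := fun i _ => mul_self_nonneg _
    calc (0:ℝ) < w j * w j := h1
      _ ≤ ∑ j : Fin 3, w j * w j := Finset.single_le_sum h2 (Finset.mem_univ j)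
  have hc0 : c 0 = 0 := by
    have hsum : ∑ j : Fin 3, w j * (c 0 * w j + c 1 * u j + c 2 * v j) = 0 := by
      simp [heq]
    have : c 0 * (∑ j : Fin 3, w j * w j) = 0 := by
      rw [Fin.sum_univ_three] at hsum hiu hiv ⊢
      linear_combination hsum - c 1 * hiu - c 2 * hiv
    rcases mul_eq_zero.mp this with h | h
    · exact h
    · exact absurd h (ne_of_gt hww)
  by_cases hc2 : c 2 = 0
  · exfalso
    have hc1 : c 1 ≠ 0 := by
      intro hc1
      apply hc
      funext j
      fin_cases j <;> simp [hc0, hc1, hc2]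
    apply hune
    ext j
    have := heq j
    rw [hc0, hc2] at this
    have : c 1 * u j = 0 := by linarith
    have := (mul_eq_zero.mp this).resolve_left hc1
    simpa using this
  · refine ⟨-(c 1) / c 2, ?_⟩
    ext j
    have := heq j
    rw [hc0] at this
    show v j = (-(c 1) / c 2) * u j
    field_simp
    linarith

lemma qexists (A B : ℝ) (h : B * A ≤ 0) :
    ∃ q : ℝ, 0 ≤ q ∧ q ≤ 1 ∧ q * B + (1 - q) * A = 0 := by
  by_cases hA0 : A = 0
  · exact ⟨0, le_refl 0, zero_le_one, by simp [hA0]⟩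
  · rcases lt_or_gt_of_ne hA0 with hA | hA
    · have hB : 0 ≤ B := by nlinarith
      have hd : (0:ℝ) < B - A := by linarith
      refine ⟨-A / (B - A), div_nonneg (by linarith) hd.le,
        (div_le_one hd).mpr (by linarith), ?_⟩
      field_simp
      ring
    · have hB : B ≤ 0 := by nlinarith
      have hd : (0:ℝ) < A - B := by linarith
      refine ⟨A / (A - B), div_nonneg hA.le hd.le, (div_le_one hd).mpr (by linarith), ?_⟩
      field_simp
      ring

lemma busch_key (w : EuclideanSpace ℝ (Fin 3)) (hw : w ≠ 0)
    (a b c : EuclideanSpace ℝ (Fin 3)) (ha : ‖a‖ ≤ 1) (hb : ‖b‖ ≤ 1) (hc : ‖c‖ ≤ 1)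
    (hpa : ⟪w, a⟫ = 0) (hpb : ⟪w, b⟫ = 0) (hpc : ⟪w, c⟫ = 0)
    (hsign : D3 w a b * D3 w a c ≤ 0) :
    ∃ q : ℝ, q ∈ Set.Icc (0:ℝ) 1 ∧
      ‖a + q • b + (1 - q) • c‖ + ‖a - q • b - (1 - q) • c‖ ≤ 2 := by
  obtain ⟨q, hq0, hq1, heq⟩ := qexists (D3 w a c) (D3 w a b) hsign
  set b' : EuclideanSpace ℝ (Fin 3) := q • b + (1 - q) • c with hb'def
  have hgrp1 : a + q • b + (1 - q) • c = a + b' := by rw [hb'def]; abel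
  have hgrp2 : a - q • b - (1 - q) • c = a - b' := by rw [hb'def]; abel
  have hb'norm : ‖b'‖ ≤ 1 := by
    calc ‖b'‖ ≤ ‖q • b‖ + ‖(1 - q) • c‖ := norm_add_le _ _
      _ = |q| * ‖b‖ + |1 - q| * ‖c‖ := by rw [norm_smul, norm_smul, Real.norm_eq_abs,
            Real.norm_eq_abs]
      _ = q * ‖b‖ + (1 - q) * ‖c‖ := by
            rw [abs_of_nonneg hq0, abs_of_nonneg (by linarith : (0:ℝ) ≤ 1 - q)]
      _ ≤ q * 1 + (1 - q) * 1 := add_le_add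
            (mul_le_mul_of_nonneg_left hb hq0)
            (mul_le_mul_of_nonneg_left hc (by linarith))
      _ = 1 := by ring
  have hDb' : D3 w a b' = 0 := by
    have e1 : D3 w a b' = q * D3 w a b + (1 - q) * D3 w a c := by
      simp only [D3_formula, hb'def, PiLp.add_apply, PiLp.smul_apply, smul_eq_mul]
      ring
    rw [e1]; linarith
  have hpb' : ⟪w, b'⟫ = 0 := by
    rw [hb'def, inner_add_right, real_inner_smul_right, real_inner_smul_right, hpb, hpc]
    ring
  refine ⟨q, ⟨hq0, hq1⟩, ?_⟩
  rw [hgrp1, hgrp2]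
  rcases eq_or_ne a 0 with ha0 | ha0
  · rw [ha0, zero_add, zero_sub, norm_neg]
    linarith
  · obtain ⟨t, hbt⟩ := dep_of_D3_zero w a b' hw hpa hpb' ha0 hDb'
    exact busch_par_case _ a b' ha hb'norm t hbt

/-- For three coplanar vectors of norm at most 1 in `ℝ³`, some permutation `(i,j,k)` and some
`q ∈ [0,1]` violate the Busch-type full-incompatibility criterion. -/
theorem coplanar_violates_busch_criterion
    (n : Fin 3 → EuclideanSpace ℝ (Fin 3)) (hn : ∀ i, ‖n i‖ ≤ 1)
    (w : EuclideanSpace ℝ (Fin 3)) (hw : w ≠ 0) (hperp : ∀ i, ⟪w, n i⟫ = 0) :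
    ∃ (i j k : Fin 3) (q : ℝ), i ≠ j ∧ j ≠ k ∧ i ≠ k ∧ q ∈ Set.Icc (0 : ℝ) 1 ∧
      ‖n i + q • n j + (1 - q) • n k‖ + ‖n i - q • n j - (1 - q) • n k‖ ≤ 2 := by
  have hskew : ∀ u v : EuclideanSpace ℝ (Fin 3), D3 w u v = -(D3 w v u) := by
    intro u v
    rw [D3_formula, D3_formula]
    ring
  by_cases h0 : D3 w (n 0) (n 1) * D3 w (n 0) (n 2) ≤ 0
  · obtain ⟨q, hq, hle⟩ := busch_key w hw (n 0) (n 1) (n 2) (hn 0) (hn 1) (hn 2)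
      (hperp 0) (hperp 1) (hperp 2) h0
    exact ⟨0, 1, 2, q, by decide, by decide, by decide, hq, hle⟩
  by_cases h1 : D3 w (n 1) (n 0) * D3 w (n 1) (n 2) ≤ 0
  · obtain ⟨q, hq, hle⟩ := busch_key w hw (n 1) (n 0) (n 2) (hn 1) (hn 0) (hn 2)
      (hperp 1) (hperp 0) (hperp 2) h1
    exact ⟨1, 0, 2, q, by decide, by decide, by decide, hq, hle⟩
  · push_neg at h0 h1
    have h2 : D3 w (n 2) (n 0) * D3 w (n 2) (n 1) ≤ 0 := by
      rw [hskew (n 2) (n 0), hskew (n 2) (n 1)]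
      rw [hskew (n 1) (n 0)] at h1
      nlinarith [mul_pos h0 h1, sq_nonneg (D3 w (n 0) (n 1))]
    obtain ⟨q, hq, hle⟩ := busch_key w hw (n 2) (n 0) (n 1) (hn 2) (hn 0) (hn 1)
      (hperp 2) (hperp 0) (hperp 1) h2
    exact ⟨2, 0, 1, q, by decide, by decide, by decide, hq, hle⟩
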